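/- Let c₁, c₂, r, δ₁ > 0 and λ > 1 with c₁ < c₂. If c₁·δ₁² < r/λ ≤ c₂·δ₁², then c₁·λδ₁ + r/(λδ₁) < c₁·δ₁ + r/δ₁ (agent 1 strictly prefers the harder route alone) and c₂·δ₁ + r/δ₁ ≤ c₂·λδ₁ + r/(λδ₁) (agent 2 weakly prefers the easier route alone). Hence the two agents' solo-optimal routes differ. -/
import Mathlib


theorem neutrality_routes_differ (c₁ c₂ r δ₁ lam : ℝ) (hc₁ : 0 < c₁) (hc₂ : 0 < c₂)
    (hr : 0 < r) (hδ : 0 < δ₁) (hlam : 1 < lam) (hcc : c₁ < c₂)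
    (h₁ : c₁ * δ₁ ^ 2 < r / lam) (h₂ : r / lam ≤ c₂ * δ₁ ^ 2) :
    c₁ * (lam * δ₁) + r / (lam * δ₁) < c₁ * δ₁ + r / δ₁ ∧
    c₂ * δ₁ + r / δ₁ ≤ c₂ * (lam * δ₁) + r / (lam * δ₁) := by
  have hl : 0 < lam := lt_trans one_pos hlam
  have h1' : c₁ * δ₁ ^ 2 * lam < r := by
    rw [lt_div_iff₀ hl] at h₁; linarith
  have h2' : r ≤ c₂ * δ₁ ^ 2 * lam := by
    rw [div_le_iff₀ hl] at h₂; linarith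
  have e1 : r / (lam * δ₁) * (lam * δ₁) = r := div_mul_cancel₀ _ (by positivity)
  have e2 : r / δ₁ * δ₁ = r := div_mul_cancel₀ _ (by positivity)
  constructor
  · nlinarith [mul_pos hl hδ, mul_pos hδ (mul_pos hl hδ)]
  · nlinarith [mul_pos hl hδ, mul_pos hδ (mul_pos hl hδ)]
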